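/- Let P be an n×n symmetric positive definite matrix and B ∈ ℝ^{m×n} with rank(B) = r. Then the symmetric projection P^{1/2}XP^{1/2}, with X = P⁻¹ − P⁻¹Bᵀ(BP⁻¹Bᵀ)⁺BP⁻¹, has exactly n − r eigenvalues equal to 1 and r eigenvalues equal to 0. -/

import Mathlib

open Matrix Polynomial Module

open scoped ComplexOrder in
noncomputable def Matrix.PosSemidef.sqrt {n : Type*} [Fintype n] [DecidableEq n]
    {𝕜 : Type*} [RCLike 𝕜] {A : Matrix n n 𝕜} (hA : A.PosSemidef) : Matrix n n 𝕜 :=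
  hA.1.eigenvectorUnitary.1 * diagonal ((↑) ∘ (√·) ∘ hA.1.eigenvalues) *
    (star hA.1.eigenvectorUnitary : Matrix n n 𝕜)

lemma my_sqrt_mul_self {n : ℕ} {P : Matrix (Fin n) (Fin n) ℝ} (hP : P.PosSemidef) :
    hP.sqrt * hP.sqrt = P := by
  have hU : (star hP.1.eigenvectorUnitary : Matrix (Fin n) (Fin n) ℝ) * hP.1.eigenvectorUnitary.1 = 1 :=
    Unitary.coe_star_mul_self _
  have hD : diagonal ((RCLike.ofReal : ℝ → ℝ) ∘ (√·) ∘ hP.1.eigenvalues) * diagonal ((RCLike.ofReal : ℝ → ℝ) ∘ (√·) ∘ hP.1.eigenvalues)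
      = diagonal (RCLike.ofReal ∘ hP.1.eigenvalues) := by
    rw [diagonal_mul_diagonal]; congr 1; funext i
    simp [Real.mul_self_sqrt (hP.eigenvalues_nonneg i)]
  conv_rhs => rw [hP.1.spectral_theorem]
  rw [Unitary.conjStarAlgAut_apply, ← hD]
  unfold Matrix.PosSemidef.sqrt
  simp only [Matrix.mul_assoc]
  rw [← Matrix.mul_assoc _ hP.1.eigenvectorUnitary.1, hU, Matrix.one_mul]

lemma my_sqrt_isHermitian {n : ℕ} {P : Matrix (Fin n) (Fin n) ℝ} (hP : P.PosSemidef) :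
    hP.sqrt.IsHermitian := by
  unfold Matrix.IsHermitian Matrix.PosSemidef.sqrt
  simp [Matrix.star_eq_conjTranspose, Matrix.mul_assoc]

lemma my_charpoly_one {ι : Type*} [Fintype ι] [DecidableEq ι] :
    (1 : Matrix ι ι ℝ).charpoly = (X - 1) ^ Fintype.card ι := by
  unfold Matrix.charpoly Matrix.charmatrix
  rw [_root_.map_one, Matrix.scalar_apply]
  rw [show (Matrix.diagonal (fun _ : ι => (X : ℝ[X])) - 1)
      = Matrix.diagonal (fun _ => X - 1) by
    rw [← Matrix.diagonal_one, Matrix.diagonal_sub]]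
  rw [Matrix.det_diagonal, Finset.prod_const, Finset.card_univ]

lemma my_charpoly_id (V : Type*) [AddCommGroup V] [Module ℝ V] [FiniteDimensional ℝ V] :
    (LinearMap.id : V →ₗ[ℝ] V).charpoly = (X - 1) ^ finrank ℝ V := by
  let b := Module.Free.chooseBasis ℝ V
  rw [← LinearMap.charpoly_toMatrix LinearMap.id b, LinearMap.toMatrix_id, my_charpoly_one,
    finrank_eq_card_chooseBasisIndex]

lemma my_charpoly_idem {n : ℕ} (M : Matrix (Fin n) (Fin n) ℝ) (h : M * M = M) :
    M.charpoly = X ^ (n - M.rank) * (X - 1) ^ M.rank := by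
  set f := M.mulVecLin with hf
  have hMc : M.charpoly = f.charpoly := by
    have e : LinearMap.toMatrix (Pi.basisFun ℝ (Fin n)) (Pi.basisFun ℝ (Fin n)) f = M := by
      have : f = Matrix.toLin' M := by
        apply LinearMap.ext
        intro v
        rw [hf, Matrix.mulVecLin_apply, Matrix.toLin'_apply]
      rw [LinearMap.toMatrix_eq_toMatrix', this, LinearMap.toMatrix'_toLin']
    rw [← e, LinearMap.charpoly_toMatrix]
  have hff : f ∘ₗ f = f := by rw [hf, ← Matrix.mulVecLin_mul, h]
  obtain ⟨p, hp⟩ := (LinearMap.isProj_iff_isIdempotentElem f).2 hff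
  have hconj := hp.eq_conj_prodMap
  have hpr : finrank ℝ ↥p = M.rank := by
    have hpe : p = LinearMap.range f := by
      apply le_antisymm
      · intro x hx
        exact ⟨x, hp.map_id x hx⟩
      · rintro x ⟨y, rfl⟩
        exact hp.map_mem y
    rw [hpe]; rfl
  have hker : finrank ℝ ↥(LinearMap.ker f) = n - M.rank := by
    have h2 := LinearMap.finrank_range_add_finrank_ker f
    rw [Module.finrank_fin_fun] at h2
    have h3 : M.rank = finrank ℝ ↥(LinearMap.range f) := rfl
    omega
  rw [hMc, hconj, LinearEquiv.charpoly_conj, LinearMap.charpoly_prodMap,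
    my_charpoly_id, IsNilpotent.charpoly_eq_X_pow_finrank (φ := (0 : Module.End ℝ ↥(LinearMap.ker f))) ⟨1, by simp⟩,
    hpr, hker, mul_comm]

lemma my_rank_one_sub {n : ℕ} (Q : Matrix (Fin n) (Fin n) ℝ) (h : Q * Q = Q) :
    (1 - Q).rank = n - Q.rank := by
  set q := Q.mulVecLin with hq
  have hsub : (1 - Q).mulVecLin = LinearMap.id - q := by
    apply LinearMap.ext
    intro v
    simp [Matrix.mulVecLin_apply, Matrix.sub_mulVec, Matrix.one_mulVec, hq]
  have hqq : ∀ x, q (q x) = q x := by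
    intro x
    have : q ∘ₗ q = q := by rw [hq, ← Matrix.mulVecLin_mul, h]
    exact congrFun (congrArg (fun g => g.toFun) this) x
  have hker : LinearMap.range (1 - Q).mulVecLin = LinearMap.ker q := by
    ext x
    constructor
    · rintro ⟨y, rfl⟩
      rw [hsub]
      simp [LinearMap.mem_ker, map_sub, hqq y]
    · intro hx
      refine ⟨x, ?_⟩
      rw [hsub]
      simp [LinearMap.mem_ker.mp hx]
  have h2 := LinearMap.finrank_range_add_finrank_ker q
  rw [Module.finrank_fin_fun] at h2
  have h3 : Q.rank = finrank ℝ ↥(LinearMap.range q) := rfl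
  have h4 : (1 - Q).rank = finrank ℝ ↥(LinearMap.ker q) := by
    rw [Matrix.rank, hker]
  omega

theorem sqrtX_eigs {m n : ℕ}
    (P : Matrix (Fin n) (Fin n) ℝ) (hP : P.PosDef)
    (B : Matrix (Fin m) (Fin n) ℝ)
    (Ep : Matrix (Fin m) (Fin m) ℝ)
    (h1 : (B * P⁻¹ * Bᵀ) * Ep * (B * P⁻¹ * Bᵀ) = B * P⁻¹ * Bᵀ)
    (h2 : Ep * (B * P⁻¹ * Bᵀ) * Ep = Ep)
    (h3 : ((B * P⁻¹ * Bᵀ) * Ep)ᵀ = (B * P⁻¹ * Bᵀ) * Ep)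
    (h4 : (Ep * (B * P⁻¹ * Bᵀ))ᵀ = Ep * (B * P⁻¹ * Bᵀ))
    (X' : Matrix (Fin n) (Fin n) ℝ)
    (hX : X' = P⁻¹ - P⁻¹ * Bᵀ * Ep * B * P⁻¹)
    (R : Matrix (Fin n) (Fin n) ℝ) (hR : R = hP.posSemidef.sqrt)
    (r : ℕ) (hr : r = B.rank) :
    (R * X' * R).charpoly = X ^ r * (X - 1) ^ (n - r) := by
  have hRR : R * R = P := by rw [hR]; exact my_sqrt_mul_self hP.posSemidef
  have hRsym : Rᵀ = R := by
    rw [hR]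
    have := my_sqrt_isHermitian hP.posSemidef
    rwa [Matrix.IsHermitian, conjTranspose_eq_transpose_of_trivial] at this
  have hdetR : IsUnit R.det := by
    have hp : IsUnit P.det := isUnit_iff_ne_zero.mpr (ne_of_gt hP.det_pos)
    rw [← hRR, Matrix.det_mul] at hp
    exact isUnit_of_mul_isUnit_left hp
  have hc1 : R * R⁻¹ = 1 := Matrix.mul_nonsing_inv _ hdetR
  have hc2 : R⁻¹ * R = 1 := Matrix.nonsing_inv_mul _ hdetR
  have hPinv : P⁻¹ = R⁻¹ * R⁻¹ := by rw [← hRR, Matrix.mul_inv_rev]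
  set C := B * R⁻¹ with hC
  set Q := Cᵀ * Ep * C with hQ
  have e1 : ∀ Z : Matrix (Fin n) (Fin n) ℝ, R * (R⁻¹ * Z) = Z := fun Z => by
    rw [← Matrix.mul_assoc, hc1, Matrix.one_mul]
  have e2 : ∀ Z : Matrix (Fin n) (Fin n) ℝ, R⁻¹ * (R * Z) = Z := fun Z => by
    rw [← Matrix.mul_assoc, hc2, Matrix.one_mul]
  have hCt : Cᵀ = R⁻¹ * Bᵀ := by
    rw [hC, Matrix.transpose_mul, Matrix.transpose_nonsing_inv, hRsym]
  have hCC : C * Cᵀ = B * P⁻¹ * Bᵀ := by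
    rw [hC, hCt, hPinv]
    simp [Matrix.mul_assoc]
  have hM : R * X' * R = 1 - Q := by
    rw [hX, hQ, hCt, hC, hPinv]
    simp only [Matrix.mul_sub, Matrix.sub_mul, Matrix.mul_assoc, e1, e2, hc1, hc2,
      Matrix.mul_one, Matrix.one_mul]
  have hQQ : Q * Q = Q := by
    have step : Q * Q = Cᵀ * (Ep * (B * P⁻¹ * Bᵀ) * Ep) * C := by
      rw [hQ, ← hCC]
      simp [Matrix.mul_assoc]
    rw [step, h2, ← hQ]
  have hrankQ : Q.rank = r := by
    have hBC : C.rank = B.rank := by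
      rw [hC]
      refine Matrix.rank_mul_eq_left_of_isUnit_det _ _ ?_
      exact Matrix.isUnit_nonsing_inv_det _ hdetR
    rw [hr, ← hBC]
    apply le_antisymm
    · rw [hQ]
      exact Matrix.rank_mul_le_right _ _
    · have h5 : C * Q * Cᵀ = C * Cᵀ := by
        have step : C * Q * Cᵀ = (C * Cᵀ) * Ep * (C * Cᵀ) := by
          rw [hQ]; simp [Matrix.mul_assoc]
        rw [step, hCC, h1, ← hCC]
      calc C.rank = (C * Cᵀ).rank := (Matrix.rank_self_mul_transpose C).symm
        _ = (C * Q * Cᵀ).rank := by rw [h5]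
        _ ≤ (C * Q).rank := Matrix.rank_mul_le_left _ _
        _ ≤ Q.rank := Matrix.rank_mul_le_right _ _
  have hrn : r ≤ n := by
    rw [hr]
    exact (Matrix.rank_le_card_width B).trans_eq (Fintype.card_fin n)
  have hidem : (1 - Q) * (1 - Q) = 1 - Q := by
    rw [Matrix.sub_mul, Matrix.one_mul, Matrix.mul_sub, Matrix.mul_one, hQQ]
    abel
  rw [hM, my_charpoly_idem _ hidem, my_rank_one_sub _ hQQ, hrankQ,
    Nat.sub_sub_self hrn]
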